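/- In the IC one-step sampling model, for any two distinct nodes u, v ∈ V with 0 < q(u) < 1 and ap(v|ū) < 1, the edge probability satisfies p(u,v) = (ap(v) − ap(v|ū)) / (q(u) · (1 − ap(v|ū))). -/

import Mathlib

set_option autoImplicit false

open MeasureTheory ProbabilityTheory

/-- **Closed-form expression for IC edge probabilities.**
In the IC one-step sampling model (seed indicators `X i u` with `P[X i u = 1] = q u`,
edge indicators `Y i u v` for `u ≠ v` with `P[Y i u v = 1] = p u v`, all mutually
independent; node `v` is one-step activated in cascade `i` iff `X i v = 1` or some
`u ≠ v` has `X i u = 1` and `Y i u v = 1`; `ap v = P[B v]` and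
`apb u v = P[B v | X u = 0]` for the first cascade), for any distinct `u, v` with
`0 < q u < 1` and `apb u v < 1`:
`p u v = (ap v − apb u v) / (q u · (1 − apb u v))`. -/
theorem ic_edge_probability_closed_form
    {V : Type*} [Fintype V] [DecidableEq V]
    {Ω : Type*} [MeasurableSpace Ω] (μ : Measure Ω) [IsProbabilityMeasure μ]
    (t : ℕ) (ht : 0 < t)
    (q : V → ℝ) (p : V → V → ℝ)
    (hq : ∀ u, q u ∈ Set.Icc (0 : ℝ) 1)
    (hp : ∀ u v, p u v ∈ Set.Icc (0 : ℝ) 1)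
    (hpdiag : ∀ v, p v v = 0)
    (X : Fin t → V → Ω → Bool) (Y : Fin t → V → V → Ω → Bool)
    (hXmeas : ∀ i u, Measurable (X i u))
    (hYmeas : ∀ i u v, Measurable (Y i u v))
    (hindep : iIndepFun
      (Sum.elim (fun a : Fin t × V => X a.1 a.2)
        (fun a : Fin t × {a : V × V // a.1 ≠ a.2} => Y a.1 a.2.1.1 a.2.1.2)) μ)
    (hX : ∀ i u, (μ {ω | X i u ω = true}).toReal = q u)
    (hY : ∀ i u v, u ≠ v → (μ {ω | Y i u v ω = true}).toReal = p u v)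
    (ap : V → ℝ)
    (hap : ∀ v, ap v = (μ {ω | X ⟨0, ht⟩ v ω = true ∨
        ∃ u, u ≠ v ∧ X ⟨0, ht⟩ u ω = true ∧ Y ⟨0, ht⟩ u v ω = true}).toReal)
    (apb : V → V → ℝ)
    (hapb : ∀ u v, apb u v =
      (μ ({ω | X ⟨0, ht⟩ v ω = true ∨
          ∃ u', u' ≠ v ∧ X ⟨0, ht⟩ u' ω = true ∧ Y ⟨0, ht⟩ u' v ω = true} ∩
        {ω | X ⟨0, ht⟩ u ω = false})).toReal /
      (μ {ω | X ⟨0, ht⟩ u ω = false}).toReal)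
    (u v : V) (huv : u ≠ v)
    (hqu : 0 < q u) (hqu1 : q u < 1) (hapb1 : apb u v < 1) :
    p u v = (ap v - apb u v) / (q u * (1 - apb u v)) := by
  classical
  set i0 : Fin t := ⟨0, ht⟩ with hi0
  set ι := (Fin t × V) ⊕ (Fin t × {a : V × V // a.1 ≠ a.2}) with hι
  set f : ι → Ω → Bool := Sum.elim (fun a => X a.1 a.2) (fun a => Y a.1 a.2.1.1 a.2.1.2)
    with hf
  set a : ι := Sum.inl (i0, u) with ha
  set b : ι := Sum.inr (i0, ⟨(u, v), huv⟩) with hb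
  have hfmeas : ∀ j : ι, Measurable (f j) := by
    rintro (⟨i, w⟩ | ⟨i, ⟨⟨w1, w2⟩, hw⟩⟩)
    · exact hXmeas i w
    · exact hYmeas i w1 w2
  -- the events
  set E1 : Set Ω := {ω | X i0 u ω = true} with hE1
  set E2 : Set Ω := {ω | Y i0 u v ω = true} with hE2
  set C : Set Ω := {ω | X i0 v ω = true ∨
      ∃ u', u' ≠ v ∧ u' ≠ u ∧ X i0 u' ω = true ∧ Y i0 u' v ω = true} with hC
  set B : Set Ω := {ω | X i0 v ω = true ∨
      ∃ u', u' ≠ v ∧ X i0 u' ω = true ∧ Y i0 u' v ω = true} with hB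
  have mE1 : MeasurableSet E1 := hXmeas i0 u (MeasurableSet.singleton true)
  have mE2 : MeasurableSet E2 := hYmeas i0 u v (MeasurableSet.singleton true)
  have mC : MeasurableSet C := by
    have hrw : C = (X i0 v ⁻¹' {true}) ∪
        ⋃ u' : V, ⋃ (_ : u' ≠ v), ⋃ (_ : u' ≠ u),
          ((X i0 u' ⁻¹' {true}) ∩ (Y i0 u' v ⁻¹' {true})) := by
      ext ω
      simp only [hC, Set.mem_setOf_eq, Set.mem_union, Set.mem_iUnion, Set.mem_preimage,
        Set.mem_singleton_iff, Set.mem_inter_iff]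
      constructor
      · rintro (h | ⟨u', h1, h2, h3, h4⟩)
        · exact Or.inl h
        · exact Or.inr ⟨u', h1, h2, h3, h4⟩
      · rintro (h | ⟨u', h1, h2, h3, h4⟩)
        · exact Or.inl h
        · exact Or.inr ⟨u', h1, h2, h3, h4⟩
    rw [hrw]
    exact (hXmeas i0 v (MeasurableSet.singleton true)).union
      (MeasurableSet.iUnion fun u' => MeasurableSet.iUnion fun _ =>
        MeasurableSet.iUnion fun _ =>
          (hXmeas i0 u' (MeasurableSet.singleton true)).inter
            (hYmeas i0 u' v (MeasurableSet.singleton true)))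
  -- decomposition B = (E1 ∩ E2) ∪ C
  have hBdec : B = (E1 ∩ E2) ∪ C := by
    ext ω
    simp only [hB, hC, hE1, hE2, Set.mem_setOf_eq, Set.mem_union, Set.mem_inter_iff]
    constructor
    · rintro (h | ⟨u', hu'v, hXu', hYu'⟩)
      · exact Or.inr (Or.inl h)
      · by_cases hu'u : u' = u
        · subst hu'u; exact Or.inl ⟨hXu', hYu'⟩
        · exact Or.inr (Or.inr ⟨u', hu'v, hu'u, hXu', hYu'⟩)
    · rintro (⟨h1, h2⟩ | h | ⟨u', h1, h2, h3, h4⟩)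
      · exact Or.inr ⟨u, huv, h1, h2⟩
      · exact Or.inl h
      · exact Or.inr ⟨u', h1, h3, h4⟩
  have hXfalse : {ω | X i0 u ω = false} = E1ᶜ := by
    ext ω; simp [hE1]
  have hBCE : B ∩ E1ᶜ = E1ᶜ ∩ C := by
    ext ω
    simp only [hBdec, Set.mem_inter_iff, Set.mem_union, Set.mem_compl_iff, hE1,
      Set.mem_setOf_eq]
    tauto
  -- index bookkeeping
  set T : Finset ι := Finset.univ \ {a, b} with hT
  have hmemT : ∀ j : ι, j ≠ a → j ≠ b → j ∈ T := by
    intro j h1 h2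
    simp [hT, h1, h2]
  have hva : (Sum.inl (i0, v) : ι) ≠ a := by
    simp only [ha, ne_eq, Sum.inl.injEq, Prod.mk.injEq, not_and]
    exact fun _ => huv.symm
  have hvb : (Sum.inl (i0, v) : ι) ≠ b := by simp [hb]
  have hu'a : ∀ u' : V, u' ≠ u → (Sum.inl (i0, u') : ι) ≠ a := by
    intro u' h
    simp only [ha, ne_eq, Sum.inl.injEq, Prod.mk.injEq, not_and]
    exact fun _ => h
  have hu'b : ∀ u' : V, (Sum.inl (i0, u') : ι) ≠ b := by intro u'; simp [hb]
  have hyu'a : ∀ (u' : V) (h : u' ≠ v), (Sum.inr (i0, ⟨(u', v), h⟩) : ι) ≠ a := by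
    intro u' h; simp [ha]
  have hyu'b : ∀ (u' : V) (h : u' ≠ v), u' ≠ u → (Sum.inr (i0, ⟨(u', v), h⟩) : ι) ≠ b := by
    intro u' h hne
    simp [hb, hne]
  -- C as preimage of the tuple of the remaining variables
  set g : Ω → ((j : T) → Bool) := fun ω j => f j ω with hg
  set D : Set ((j : T) → Bool) := {h | h ⟨Sum.inl (i0, v), hmemT _ hva hvb⟩ = true ∨
      ∃ u', ∃ (h1 : u' ≠ v), ∃ (h2 : u' ≠ u),
        h ⟨Sum.inl (i0, u'), hmemT _ (hu'a u' h2) (hu'b u')⟩ = true ∧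
        h ⟨Sum.inr (i0, ⟨(u', v), h1⟩), hmemT _ (hyu'a u' h1) (hyu'b u' h1 h2)⟩ = true}
    with hD
  have hCpre : C = g ⁻¹' D := by
    ext ω
    simp only [hC, hD, hg, Set.mem_preimage, Set.mem_setOf_eq, hf, Sum.elim_inl, Sum.elim_inr]
    constructor
    · rintro (h | ⟨u', h1, h2, h3, h4⟩)
      · exact Or.inl h
      · exact Or.inr ⟨u', h1, h2, h3, h4⟩
    · rintro (h | ⟨u', h1, h2, h3, h4⟩)
      · exact Or.inl h
      · exact Or.inr ⟨u', h1, h2, h3, h4⟩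
  have mD : MeasurableSet D := .of_discrete
  -- independence facts
  have hdisj1 : Disjoint ({a} : Finset ι) T := by
    rw [Finset.disjoint_left]
    intro j hj
    simp only [Finset.mem_singleton] at hj
    simp [hT, hj]
  have hdisj2 : Disjoint ({a, b} : Finset ι) T := by
    rw [Finset.disjoint_left]
    intro j hj
    simp only [Finset.mem_insert, Finset.mem_singleton] at hj
    rcases hj with hj | hj <;> simp [hT, hj]
  have ind1 := hindep.indepFun_finset {a} T hdisj1 hfmeas
  have ind2 := hindep.indepFun_finset {a, b} T hdisj2 hfmeas
  have ind3 : IndepFun (f a) (f b) μ := hindep.indepFun (show a ≠ b by simp [ha, hb])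
  have key1 : μ (E1ᶜ ∩ C) = μ E1ᶜ * μ C := by
    have h := (indepFun_iff_measure_inter_preimage_eq_mul.mp ind1)
      {h : (j : ({a} : Finset ι)) → Bool | h ⟨a, Finset.mem_singleton_self a⟩ = false} D
      .of_discrete mD
    have e1 : (fun ω (j : ({a} : Finset ι)) => f j ω) ⁻¹'
        {h | h ⟨a, Finset.mem_singleton_self a⟩ = false} = E1ᶜ := by
      ext ω
      simp [hE1, hf, ha]
    rw [e1, ← hCpre] at h
    exact h
  have key2 : μ ((E1 ∩ E2) ∩ C) = μ (E1 ∩ E2) * μ C := by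
    have hma : a ∈ ({a, b} : Finset ι) := Finset.mem_insert_self a _
    have hmb : b ∈ ({a, b} : Finset ι) := Finset.mem_insert_of_mem (Finset.mem_singleton_self b)
    have h := (indepFun_iff_measure_inter_preimage_eq_mul.mp ind2)
      {h : (j : ({a, b} : Finset ι)) → Bool | h ⟨a, hma⟩ = true ∧ h ⟨b, hmb⟩ = true} D
      .of_discrete mD
    have e1 : (fun ω (j : ({a, b} : Finset ι)) => f j ω) ⁻¹'
        {h | h ⟨a, hma⟩ = true ∧ h ⟨b, hmb⟩ = true} = E1 ∩ E2 := by
      ext ω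
      simp [hE1, hE2, hf, ha, hb, Set.mem_inter_iff]
    rw [e1, ← hCpre] at h
    exact h
  have key3 : μ (E1 ∩ E2) = μ E1 * μ E2 := by
    have h := (indepFun_iff_measure_inter_preimage_eq_mul.mp ind3)
      {true} {true} (MeasurableSet.singleton true) (MeasurableSet.singleton true)
    have e1 : f a ⁻¹' {true} = E1 := by ext ω; simp [hE1, hf, ha]
    have e2 : f b ⁻¹' {true} = E2 := by ext ω; simp [hE2, hf, hb]
    rw [e1, e2] at h
    exact h
  -- numeric values
  have PrE1 : (μ E1).toReal = q u := by rw [hE1]; exact hX i0 u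
  have PrE2 : (μ E2).toReal = p u v := by rw [hE2]; exact hY i0 u v huv
  have PrE1c : (μ E1ᶜ).toReal = 1 - q u := by
    rw [prob_compl_eq_one_sub mE1, ENNReal.toReal_sub_of_le prob_le_one ENNReal.one_ne_top]
    rw [PrE1, ENNReal.toReal_one]
  have PrE12 : (μ (E1 ∩ E2)).toReal = q u * p u v := by
    rw [key3, ENNReal.toReal_mul, PrE1, PrE2]
  set c : ℝ := (μ C).toReal with hc
  have hqc : 1 - q u ≠ 0 := by linarith
  have hapbc : apb u v = c := by
    have h := hapb u v
    rw [← hB, hXfalse, hBCE, key1, ENNReal.toReal_mul, PrE1c] at h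
    rw [h, ← hc, mul_comm, mul_div_assoc, div_self hqc, mul_one]
  have hBin := measure_union_add_inter (μ := μ) (E1 ∩ E2) mC
  have hreal : (μ ((E1 ∩ E2) ∪ C)).toReal + (μ ((E1 ∩ E2) ∩ C)).toReal =
      (μ (E1 ∩ E2)).toReal + (μ C).toReal := by
    rw [← ENNReal.toReal_add (measure_ne_top μ _) (measure_ne_top μ _),
      ← ENNReal.toReal_add (measure_ne_top μ _) (measure_ne_top μ _), hBin]
  have PrInter : (μ ((E1 ∩ E2) ∩ C)).toReal = q u * p u v * c := by
    rw [key2, ENNReal.toReal_mul, PrE12, ← hc]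
  have hapv : ap v = q u * p u v + c - q u * p u v * c := by
    have h := hap v
    rw [← hB, hBdec] at h
    rw [h]
    linarith [hreal, PrInter, PrE12, hc]
  have h1c : 1 - c ≠ 0 := by
    rw [hapbc] at hapb1
    linarith
  rw [hapbc, hapv]
  have hring : q u * p u v + c - q u * p u v * c - c = p u v * (q u * (1 - c)) := by ring
  rw [hring, mul_div_assoc, div_self (mul_ne_zero (ne_of_gt hqu) h1c), mul_one]
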